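/- Let y be obtained from a binary string x by deleting two symbols both equal to 1. If N_{1111}(x) ≡ N_{1111}(y) (mod 7), then the string 1111 is preserved from x to y. -/

import Mathlib

/-- Delete from `x` the symbols at the positions in `S`. -/
def deleteIdxs (x : List Bool) (S : Finset ℕ) : List Bool :=
  ((List.range x.length).filter (fun i => decide (i ∉ S))).map (fun i => x.getD i false)

/-- `w` occurs in `x` at position `i`. -/
def occursAt (w x : List Bool) (i : ℕ) : Prop := w <+: x.drop i

/-- The number of (possibly overlapping) occurrences of `w` in `x`. -/
def Nw (w x : List Bool) : ℕ :=
  ((Finset.range x.length).filter (fun i => w <+: x.drop i)).card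

/-- The position in the shortened string of the junction produced by deleting position `k`. -/
def junction (S : Finset ℕ) (k : ℕ) : ℕ :=
  ((Finset.range k).filter (fun m => m ∉ S)).card

/-- `w` is preserved from `x` to `y`: some set `S` of deleted positions realizing `y`
destroys no occurrence of `w` in `x` and no occurrence of `w` in `y` spans a junction. -/
def Preserved (w x y : List Bool) : Prop :=
  ∃ S : Finset ℕ,
    (∀ k ∈ S, k < x.length) ∧
    S.card + y.length = x.length ∧
    deleteIdxs x S = y ∧
    (∀ i, occursAt w x i → ∀ k ∈ S, ¬ (i ≤ k ∧ k < i + w.length)) ∧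
    (∀ j, occursAt w y j → ∀ k ∈ S, ¬ (j < junction S k ∧ junction S k < j + w.length))

/-- `x` has a (maximal) run of length `ℓ` starting at position `i`. -/
def runAt (x : List Bool) (i ℓ : ℕ) : Prop :=
  0 < ℓ ∧ i + ℓ ≤ x.length ∧
  (∀ j, i ≤ j → j < i + ℓ → x.getD j false = x.getD i false) ∧
  (i = 0 ∨ x.getD (i - 1) false ≠ x.getD i false) ∧
  (i + ℓ = x.length ∨ x.getD (i + ℓ) false ≠ x.getD i false)

/-- position `k` of `x` lies in a run of length `ℓ`. -/
def inRun (x : List Bool) (k ℓ : ℕ) : Prop := ∃ i, runAt x i ℓ ∧ i ≤ k ∧ k < i + ℓ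

def w0000 : List Bool := [false, false, false, false]
def w1111 : List Bool := [true, true, true, true]
def w11011 : List Bool := [true, true, false, true, true]
def w110011 : List Bool := [true, true, false, false, true, true]

/-- The set of strings obtainable from `x` by deleting two symbols. -/
def D2 (x : List Bool) : Set (List Bool) :=
  { y | ∃ i j : ℕ, i < j ∧ j < x.length ∧ y = deleteIdxs x ({i, j} : Finset ℕ) }

/-- run-length representation of the runs of ones, in order. -/
def tau1 (x : List Bool) : List ℕ :=
  ((x.splitBy (· == ·)).filter (fun r => r.headD false)).map List.length

/-- the subsequence of `tau1` of entries at least 2. -/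
def tauGe2 (x : List Bool) : List ℕ := (tau1 x).filter (fun ℓ => decide (2 ≤ ℓ))

/-- sum of the odd-indexed entries. -/
def oddIdxSum (l : List ℕ) : ℕ :=
  ((Finset.range l.length).filter (fun i => i % 2 = 1)).sum (fun i => l.getD i 0)

namespace TwoOnes

def Gf (k₁ k₂ j : ℕ) : ℕ := if j < k₁ then j else if j + 1 < k₂ then j + 1 else j + 2

lemma occursAt_iff (z : List Bool) (i : ℕ) :
    occursAt w1111 z i ↔ i + 4 ≤ z.length ∧ z.getD i false = true ∧ z.getD (i+1) false = true
      ∧ z.getD (i+2) false = true ∧ z.getD (i+3) false = true := by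
  constructor
  · rintro ⟨t, ht⟩
    have hlen : i + 4 ≤ z.length := by
      have := congrArg List.length ht
      simp [w1111] at this
      omega
    have h4 : ∀ j, j < 4 → z.getD (i + j) false = true := by
      intro j hj
      have h1 : i + j < z.length := by omega
      have h2 : j < (z.drop i).length := by simp; omega
      rw [List.getD_eq_getElem _ _ h1]
      have e1 : z[i+j] = (z.drop i)[j]'h2 := List.getElem_drop.symm
      have h2' : j < (w1111 ++ t).length := by rw [ht]; exact h2
      have e2 : (z.drop i)[j]'h2 = (w1111 ++ t)[j]'h2' := List.getElem_of_eq ht.symm h2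
      rw [e1, e2, List.getElem_append]
      have hw : j < w1111.length := by simp [w1111]; omega
      rw [dif_pos hw]
      interval_cases j <;> simp [w1111]
    exact ⟨hlen, h4 0 (by omega), by simpa using h4 1 (by omega), by simpa using h4 2 (by omega),
      by simpa using h4 3 (by omega)⟩
  · rintro ⟨hlen, h0, h1, h2, h3⟩
    rw [occursAt, List.prefix_iff_eq_take]
    have hl4 : w1111.length = 4 := by simp [w1111]
    rw [hl4]
    apply List.ext_getElem
    · simp [w1111]; omega
    · intro n hn1 hn2
      have hn : n < 4 := by simp [w1111] at hn1; omega
      have hzn : i + n < z.length := by omega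
      rw [List.getElem_take, List.getElem_drop]
      have e : z[i + n] = z.getD (i+n) false := (List.getD_eq_getElem _ _ hzn).symm
      rw [e]
      interval_cases n
      · simpa [w1111] using h0.symm
      · simpa [w1111] using h1.symm
      · simpa [w1111] using h2.symm
      · simpa [w1111] using h3.symm

lemma junction_pair {k₁ k₂ : ℕ} (h : k₁ < k₂) (m : ℕ) :
    junction {k₁, k₂} m = m - (if k₁ < m then 1 else 0) - (if k₂ < m then 1 else 0) := by
  induction m with
  | zero => simp [junction]
  | succ m ih =>
    have step : junction {k₁, k₂} (m+1) = junction {k₁, k₂} m + (if m ∈ ({k₁, k₂} : Finset ℕ) then 0 else 1) := by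
      rw [junction, junction, Finset.range_add_one, Finset.filter_insert]
      split_ifs with hm
      · simp
      · rw [Finset.card_insert_of_notMem (by simp)]
    rw [step, ih]
    by_cases hm1 : m = k₁ <;> by_cases hm2 : m = k₂ <;>
      simp [hm1, hm2, Finset.mem_insert] <;> split_ifs <;> omega

lemma filter_range_pair {k₁ k₂ n : ℕ} (h12 : k₁ < k₂) (h2 : k₂ < n) :
    (List.range n).filter (fun i => decide (i ∉ ({k₁, k₂} : Finset ℕ))) =
      List.range' 0 k₁ ++ List.range' (k₁+1) (k₂-k₁-1) ++ List.range' (k₂+1) (n-k₂-1) := by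
  have e1 : List.range n = List.range' 0 k₁ ++ ([k₁] ++ (List.range' (k₁+1) (k₂-k₁-1) ++ ([k₂] ++ List.range' (k₂+1) (n-k₂-1)))) := by
    rw [List.range_eq_range']
    have a4 : [k₂] = List.range' k₂ 1 := by simp
    have a5 : [k₁] = List.range' k₁ 1 := by simp
    rw [a4, a5]
    rw [show (List.range' k₂ 1 ++ List.range' (k₂+1) (n-k₂-1) : List ℕ) = List.range' k₂ (n-k₂) by
      have := List.range'_append (s := k₂) (m := 1) (n := n-k₂-1) (step := 1)
      simp only [Nat.mul_one] at this
      rw [show k₂ + 1 * 1 = k₂ + 1 by ring] at this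
      rw [this]; congr 1; omega]
    rw [show (List.range' (k₁+1) (k₂-k₁-1) ++ List.range' k₂ (n-k₂) : List ℕ) = List.range' (k₁+1) (n-k₁-1) by
      have := List.range'_append (s := k₁+1) (m := k₂-k₁-1) (n := n-k₂) (step := 1)
      rw [show k₁ + 1 + 1 * (k₂ - k₁ - 1) = k₂ by omega] at this
      rw [this]; congr 1; omega]
    rw [show (List.range' k₁ 1 ++ List.range' (k₁+1) (n-k₁-1) : List ℕ) = List.range' k₁ (n-k₁) by
      have := List.range'_append (s := k₁) (m := 1) (n := n-k₁-1) (step := 1)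
      rw [show k₁ + 1 * 1 = k₁ + 1 by ring] at this
      rw [this]; congr 1; omega]
    have := List.range'_append (s := 0) (m := k₁) (n := n-k₁) (step := 1)
    rw [show 0 + 1 * k₁ = k₁ by ring] at this
    rw [this]; congr 1; omega
  rw [e1, List.filter_append, List.filter_append, List.filter_append, List.filter_append]
  have p1 : ∀ l : List ℕ, (∀ a ∈ l, a ≠ k₁ ∧ a ≠ k₂) → l.filter (fun i => decide (i ∉ ({k₁, k₂} : Finset ℕ))) = l := by
    intro l hl
    apply List.filter_eq_self.mpr
    intro a ha
    simp [Finset.mem_insert, (hl a ha).1, (hl a ha).2]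
  rw [p1 (List.range' 0 k₁) (by intro a ha; rw [List.mem_range'] at ha; omega)]
  rw [p1 (List.range' (k₁+1) (k₂-k₁-1)) (by intro a ha; rw [List.mem_range'] at ha; omega)]
  rw [p1 (List.range' (k₂+1) (n-k₂-1)) (by intro a ha; rw [List.mem_range'] at ha; omega)]
  have q1 : ([k₁] : List ℕ).filter (fun i => decide (i ∉ ({k₁, k₂} : Finset ℕ))) = [] := by simp
  have q2 : ([k₂] : List ℕ).filter (fun i => decide (i ∉ ({k₁, k₂} : Finset ℕ))) = [] := by simp
  rw [q1, q2]
  simp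

lemma deleteIdxs_pair_length {x : List Bool} {k₁ k₂ : ℕ} (h12 : k₁ < k₂) (h2 : k₂ < x.length) :
    (deleteIdxs x ({k₁, k₂} : Finset ℕ)).length = x.length - 2 := by
  rw [deleteIdxs, List.length_map, filter_range_pair h12 h2]
  simp
  omega

lemma deleteIdxs_pair_getD {x : List Bool} {k₁ k₂ : ℕ} (h12 : k₁ < k₂) (h2 : k₂ < x.length)
    {j : ℕ} (hj : j + 2 < x.length) :
    (deleteIdxs x ({k₁, k₂} : Finset ℕ)).getD j false = x.getD (Gf k₁ k₂ j) false := by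
  set n := x.length with hn
  have hlen : (deleteIdxs x ({k₁, k₂} : Finset ℕ)).length = n - 2 := deleteIdxs_pair_length h12 h2
  rw [List.getD_eq_getElem _ _ (by omega : j < (deleteIdxs x ({k₁, k₂} : Finset ℕ)).length)]
  simp only [deleteIdxs]
  rw [List.getElem_map]
  congr 1
  have e := filter_range_pair (n := n) h12 h2
  have hj' : j < ((List.range n).filter (fun i => decide (i ∉ ({k₁, k₂} : Finset ℕ)))).length := by
    rw [e]; simp; omega
  rw [List.getElem_of_eq e hj']
  rw [List.getElem_append]
  have l1 : (List.range' 0 k₁ ++ List.range' (k₁+1) (k₂-k₁-1)).length = k₂ - 1 := by simp; omega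
  by_cases c1 : j < k₁
  · rw [dif_pos (by rw [l1]; omega)]
    rw [List.getElem_append, dif_pos (by simp; omega)]
    rw [List.getElem_range']
    simp [Gf, c1]
  · by_cases c2 : j + 1 < k₂
    · rw [dif_pos (by rw [l1]; omega)]
      rw [List.getElem_append, dif_neg (by simp; omega)]
      rw [List.getElem_range']
      simp only [Gf, if_neg c1, if_pos c2, List.length_range']
      omega
    · rw [dif_neg (by rw [l1]; omega)]
      rw [List.getElem_range']
      simp only [Gf, if_neg c1, if_neg c2]
      rw [l1]
      omega

lemma run_break (x : List Bool) (i : ℕ) (h4 : i + 4 ≤ x.length)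
    (h : ∀ m, i ≤ m → m ≤ i + 3 → x.getD m false = true) :
    ∃ E, (∀ m, i ≤ m → m ≤ E → x.getD m false = true) ∧ i + 3 ≤ E ∧ E + 1 ≤ x.length ∧
      (E + 1 = x.length ∨ x.getD (E + 1) false = false) ∧
      (∀ e, e + 1 ≤ x.length → (∀ m, i ≤ m → m ≤ e → x.getD m false = true) → e ≤ E) := by
  set Q : ℕ → Prop := fun e => ∀ m ≤ e, i ≤ m → x.getD m false = true with hQ
  have hQ3 : Q (i + 3) := fun m hm1 hm2 => h m hm2 hm1
  have hb : i + 3 ≤ x.length - 1 := by omega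
  refine ⟨Nat.findGreatest Q (x.length - 1), ?_, ?_, ?_, ?_, ?_⟩
  · intro m h1 h2
    exact Nat.findGreatest_spec hb hQ3 m h2 h1
  · exact Nat.le_findGreatest hb hQ3
  · have := Nat.findGreatest_le (P := Q) (x.length - 1)
    omega
  · by_cases hend : Nat.findGreatest Q (x.length - 1) + 1 = x.length
    · exact Or.inl hend
    · right
      have hle := Nat.findGreatest_le (P := Q) (x.length - 1)
      have hgr : ¬ Q (Nat.findGreatest Q (x.length - 1) + 1) :=
        Nat.findGreatest_is_greatest (n := x.length - 1) (by omega) (by omega)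
      have hgr2 : ¬ (∀ m ≤ Nat.findGreatest Q (x.length - 1) + 1, i ≤ m → x.getD m false = true) := hgr
      push_neg at hgr2
      obtain ⟨m, hm1, hm2, hm3⟩ := hgr2
      have hm : m = Nat.findGreatest Q (x.length - 1) + 1 := by
        by_contra hne
        exact hm3 (Nat.findGreatest_spec hb hQ3 m (by omega) hm2)
      rw [← hm]
      simpa using hm3
  · intro e he1 he2
    exact Nat.le_findGreatest (by omega) (fun m hm1 hm2 => he2 m hm2 hm1)

lemma run_start (x : List Bool) (i : ℕ)
    (h : x.getD i false = true) :
    ∃ s, (∀ m, s ≤ m → m ≤ i → x.getD m false = true) ∧ s ≤ i ∧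
      (s = 0 ∨ x.getD (s - 1) false = false) ∧
      (∀ s', s' ≤ i → (∀ m, s' ≤ m → m ≤ i → x.getD m false = true) → s ≤ s') := by
  set Q : ℕ → Prop := fun d => ∀ m ≤ i, i - d ≤ m → x.getD m false = true with hQ
  have hQ0 : Q 0 := by
    intro m hm1 hm2
    have : m = i := by omega
    rw [this]; exact h
  refine ⟨i - Nat.findGreatest Q i, ?_, by omega, ?_, ?_⟩
  · intro m h1 h2
    exact Nat.findGreatest_spec (Nat.zero_le i) hQ0 m h2 h1
  · by_cases hz : i - Nat.findGreatest Q i = 0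
    · exact Or.inl hz
    · right
      have hle := Nat.findGreatest_le (P := Q) i
      have hgr : ¬ Q (Nat.findGreatest Q i + 1) :=
        Nat.findGreatest_is_greatest (n := i) (by omega) (by omega)
      have hgr2 : ¬ (∀ m ≤ i, i - (Nat.findGreatest Q i + 1) ≤ m → x.getD m false = true) := hgr
      push_neg at hgr2
      obtain ⟨m, hm1, hm2, hm3⟩ := hgr2
      have hm : m = i - (Nat.findGreatest Q i + 1) := by
        by_contra hne
        exact hm3 (Nat.findGreatest_spec (Nat.zero_le i) hQ0 m hm1 (by omega))
      have hm' : m = i - Nat.findGreatest Q i - 1 := by omega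
      rw [← hm']
      simpa using hm3
  · intro s' hs1 hs2
    have : i - s' ≤ Nat.findGreatest Q i :=
      Nat.le_findGreatest (by omega) (fun m hm1 hm2 => hs2 m (by omega) hm1)
    omega

end TwoOnes

/-- If two ones are deleted and `N₁₁₁₁(x) ≡ N₁₁₁₁(y) (mod 7)`, then `1111` is preserved. -/
theorem two_ones_1111_preserved (x y : List Bool) (k₁ k₂ : ℕ)
    (h12 : k₁ < k₂) (h2 : k₂ < x.length)
    (hv1 : x.getD k₁ false = true) (hv2 : x.getD k₂ false = true)
    (hy : y = deleteIdxs x ({k₁, k₂} : Finset ℕ))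
    (hmod : Nw w1111 x ≡ Nw w1111 y [MOD 7]) :
    Preserved w1111 x y := by
  classical
  set n := x.length with hn
  have hn2 : 2 ≤ n := by omega
  have hw4 : w1111.length = 4 := rfl
  have hS2 : ({k₁, k₂} : Finset ℕ).card = 2 := by
    rw [Finset.card_insert_of_notMem (by simp; omega)]
    simp
  have hylen : y.length = n - 2 := by rw [hy]; exact TwoOnes.deleteIdxs_pair_length h12 h2
  set G := TwoOnes.Gf k₁ k₂ with hG
  have hyget : ∀ j, j + 2 < n → y.getD j false = x.getD (G j) false := by
    intro j hj; rw [hy, hG]; exact TwoOnes.deleteIdxs_pair_getD h12 h2 hj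
  have hc : ∀ m, junction {k₁, k₂} m = m - (if k₁ < m then 1 else 0) - (if k₂ < m then 1 else 0) :=
    TwoOnes.junction_pair h12
  have hGmono : ∀ a b, a < b → G a < G b := by
    intro a b hab; simp only [hG, TwoOnes.Gf]; split_ifs <;> omega
  have hGub : ∀ a, a ≤ G a ∧ G a ≤ a + 2 := by
    intro a; simp only [hG, TwoOnes.Gf]; split_ifs <;> omega
  have hGadd3 : ∀ a, G a + 3 ≤ G (a + 3) := by
    intro a; simp only [hG, TwoOnes.Gf]; split_ifs <;> omega
  have hGnotS : ∀ a, G a ≠ k₁ ∧ G a ≠ k₂ := by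
    intro a; simp only [hG, TwoOnes.Gf]; split_ifs <;> omega
  have hGinj : ∀ a b, G a = G b → a = b := by
    intro a b hab
    rcases lt_trichotomy a b with h | h | h
    · have := hGmono a b h; omega
    · exact h
    · have := hGmono b a h; omega
  have hGle : ∀ a b, G a ≤ G b → a ≤ b := by
    intro a b hab
    by_contra hcc
    push_neg at hcc
    have := hGmono b a hcc; omega
  have hGinv : ∀ m, m ≠ k₁ → m ≠ k₂ → ∃ t, G t = m := by
    intro m hm1 hm2
    refine ⟨if m < k₁ then m else if m < k₂ then m - 1 else m - 2, ?_⟩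
    simp only [hG, TwoOnes.Gf]; split_ifs <;> omega
  have hcG : ∀ t, junction {k₁, k₂} (G t) = t := by
    intro t; rw [hc]; simp only [hG, TwoOnes.Gf]; split_ifs <;> omega
  have hcmono : ∀ a b, a ≤ b → junction {k₁, k₂} a ≤ junction {k₁, k₂} b := by
    intro a b h; rw [hc, hc]; split_ifs <;> omega
  -- occurrence sets
  set Px := (Finset.range x.length).filter (fun i => w1111 <+: x.drop i) with hPxd
  set Py := (Finset.range y.length).filter (fun i => w1111 <+: y.drop i) with hPyd
  have hNwx : Nw w1111 x = Px.card := rfl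
  have hNwy : Nw w1111 y = Py.card := rfl
  have hmPx : ∀ i, i ∈ Px ↔ occursAt w1111 x i := by
    intro i
    rw [hPxd, Finset.mem_filter, Finset.mem_range]
    constructor
    · rintro ⟨_, h⟩; exact h
    · intro h
      have := (TwoOnes.occursAt_iff x i).mp h
      exact ⟨by omega, h⟩
  have hmPy : ∀ j, j ∈ Py ↔ occursAt w1111 y j := by
    intro j
    rw [hPyd, Finset.mem_filter, Finset.mem_range]
    constructor
    · rintro ⟨_, h⟩; exact h
    · intro h
      have := (TwoOnes.occursAt_iff y j).mp h
      exact ⟨by omega, h⟩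
  have hoccx_ones : ∀ i, occursAt w1111 x i → ∀ m, i ≤ m → m ≤ i + 3 → x.getD m false = true := by
    intro i hi m hm1 hm2
    obtain ⟨_, a0, a1, a2, a3⟩ := (TwoOnes.occursAt_iff x i).mp hi
    have : m = i ∨ m = i + 1 ∨ m = i + 2 ∨ m = i + 3 := by omega
    rcases this with h | h | h | h <;> rw [h] <;> assumption
  -- F1 : a y-occurrence gives an all-ones interval in x
  have hF1 : ∀ j, occursAt w1111 y j → ∀ m, G j ≤ m → m ≤ G (j+3) → x.getD m false = true := by
    intro j hj m hm1 hm2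
    have hjl : j + 4 ≤ n - 2 := by
      have := ((TwoOnes.occursAt_iff y j).mp hj).1; omega
    by_cases e1 : m = k₁
    · rw [e1]; exact hv1
    by_cases e2 : m = k₂
    · rw [e2]; exact hv2
    obtain ⟨t, ht⟩ := hGinv m e1 e2
    have htj : j ≤ t := hGle j t (by omega)
    have htj3 : t ≤ j + 3 := hGle t (j+3) (by omega)
    have hyt : y.getD t false = true := by
      obtain ⟨_, a0, a1, a2, a3⟩ := (TwoOnes.occursAt_iff y j).mp hj
      have : t = j ∨ t = j + 1 ∨ t = j + 2 ∨ t = j + 3 := by omega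
      rcases this with h | h | h | h <;> rw [h] <;> assumption
    rw [← ht, ← hyget t (by omega)]
    exact hyt
  have hGocc : ∀ j, occursAt w1111 y j →
      occursAt w1111 x (G j) ∧ G j + 3 ≤ G (j+3) ∧ G (j+3) < n := by
    intro j hj
    have hjl : j + 4 ≤ n - 2 := by
      have := ((TwoOnes.occursAt_iff y j).mp hj).1; omega
    have hub := hGub (j+3)
    have h3 : G j + 3 ≤ G (j+3) := hGadd3 j
    have hlt : G (j+3) < n := by omega
    refine ⟨?_, h3, hlt⟩
    rw [TwoOnes.occursAt_iff]
    exact ⟨by omega, hF1 j hj _ (by omega) (by omega), hF1 j hj _ (by omega) (by omega),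
      hF1 j hj _ (by omega) (by omega), hF1 j hj _ (by omega) (by omega)⟩
  have hle0 : Py.card ≤ Px.card :=
    Finset.card_le_card_of_injOn G
      (fun j hj => (hmPx _).mpr (hGocc j ((hmPy j).mp hj)).1)
      (fun a _ b _ h => hGinj a b h)
  -- run data
  have hrunE : ∀ i, occursAt w1111 x i → ∃ E,
      (∀ m, i ≤ m → m ≤ E → x.getD m false = true) ∧ i + 3 ≤ E ∧ E + 1 ≤ n ∧
      (E + 1 = n ∨ x.getD (E+1) false = false) ∧
      (∀ e, e + 1 ≤ n → (∀ m, i ≤ m → m ≤ e → x.getD m false = true) → e ≤ E) := by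
    intro i hi
    exact TwoOnes.run_break x i (((TwoOnes.occursAt_iff x i).mp hi).1) (hoccx_ones i hi)
  choose! E hE1 hE2 hE3 hE4 hE5 using hrunE
  have hrunS : ∀ i, occursAt w1111 x i → ∃ s,
      (∀ m, s ≤ m → m ≤ i → x.getD m false = true) ∧ s ≤ i ∧
      (s = 0 ∨ x.getD (s - 1) false = false) ∧
      (∀ s', s' ≤ i → (∀ m, s' ≤ m → m ≤ i → x.getD m false = true) → s ≤ s') := by
    intro i hi
    exact TwoOnes.run_start x i (((TwoOnes.occursAt_iff x i).mp hi).2.1)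
  choose! s hs1 hs2 hs3 hs4 using hrunS
  -- equality of runs sharing a point
  have hEle : ∀ a b k, occursAt w1111 x a → occursAt w1111 x b →
      s a ≤ k → k ≤ E a → s b ≤ k → k ≤ E b → E b ≤ E a := by
    intro a b k ha hb h1 h2 h3 h4
    apply hE5 a ha (E b) (hE3 b hb)
    intro m hm1 hm2
    rcases le_or_gt m (E a) with h | h
    · exact hE1 a ha m hm1 h
    · rcases le_or_gt m b with h' | h'
      · exact hs1 b hb m (by omega) h'
      · exact hE1 b hb m (by omega) hm2
  have hsle : ∀ a b k, occursAt w1111 x a → occursAt w1111 x b →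
      s a ≤ k → k ≤ E a → s b ≤ k → k ≤ E b → s a ≤ s b := by
    intro a b k ha hb h1 h2 h3 h4
    rcases le_or_gt (s b) a with hba | hba
    · apply hs4 a ha (s b) hba
      intro m hm1 hm2
      rcases le_or_gt (s a) m with h | h
      · exact hs1 a ha m h hm2
      · rcases le_or_gt m b with h' | h'
        · exact hs1 b hb m hm1 h'
        · exact hE1 b hb m (by omega) (by omega)
    · have := hs2 a ha; omega
  have hrun_eq : ∀ a b k, occursAt w1111 x a → occursAt w1111 x b →
      s a ≤ k → k ≤ E a → s b ≤ k → k ≤ E b → E a = E b ∧ s a = s b := by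
    intro a b k ha hb h1 h2 h3 h4
    exact ⟨le_antisymm (hEle b a k hb ha h3 h4 h1 h2) (hEle a b k ha hb h1 h2 h3 h4),
      le_antisymm (hsle a b k ha hb h1 h2 h3 h4) (hsle b a k hb ha h3 h4 h1 h2)⟩
  -- L2 : a destroyed occurrence forces a strict drop
  have hmiss : ∀ i k, occursAt w1111 x i → (k = k₁ ∨ k = k₂) → i ≤ k → k ≤ i + 3 →
      Py.card + 1 ≤ Px.card := by
    intro i k hi hk hik1 hik2
    have hiE := hE1 i hi
    have hi3 := hE2 i hi
    have hiE3 := hE3 i hi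
    have hiE4 := hE4 i hi
    have hmax := hE5 i hi
    set m0 := if k + 3 ≤ E i then k else E i - 3 with hm0
    have hm0occ : occursAt w1111 x m0 := by
      rw [TwoOnes.occursAt_iff]
      rw [hm0]
      split_ifs with hcase
      · exact ⟨by omega, hiE k (by omega) (by omega), hiE (k+1) (by omega) (by omega),
          hiE (k+2) (by omega) (by omega), hiE (k+3) (by omega) (by omega)⟩
      · refine ⟨by omega, ?_, ?_, ?_, ?_⟩ <;> exact hiE _ (by omega) (by omega)
    have hm0notim : ∀ j, occursAt w1111 y j → G j ≠ m0 := by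
      intro j hjocc hGj
      rw [hm0] at hGj
      have hnot := hGnotS j
      by_cases hcase : k + 3 ≤ E i
      · rw [if_pos hcase] at hGj
        rcases hk with rfl | rfl <;> omega
      · rw [if_neg hcase] at hGj
        obtain ⟨_, h3, hlt⟩ := hGocc j hjocc
        have hGj3 : G (j+3) ≤ E i := by
          by_contra hgt
          push_neg at hgt
          have hone : x.getD (E i + 1) false = true := hF1 j hjocc (E i + 1) (by omega) (by omega)
          have := hmax (E i + 1) (by omega) (by
            intro m hm1 hm2
            rcases le_or_gt m (E i) with h | h
            · exact hiE m hm1 h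
            · have : m = E i + 1 := by omega
              rw [this]; exact hone)
          omega
        have e1 : G j < G (j+1) := hGmono _ _ (by omega)
        have e2 : G (j+1) < G (j+2) := hGmono _ _ (by omega)
        have e3 : G (j+2) < G (j+3) := hGmono _ _ (by omega)
        have hd : k = G (j+1) ∨ k = G (j+2) ∨ k = G (j+3) := by omega
        have hn1 := hGnotS (j+1)
        have hn2 := hGnotS (j+2)
        have hn3 := hGnotS (j+3)
        rcases hk with rfl | rfl <;> omega
    have hm0Px : m0 ∈ Px := (hmPx m0).mpr hm0occ
    have hsub : Py.card ≤ (Px.erase m0).card :=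
      Finset.card_le_card_of_injOn G
        (fun j hj => Finset.mem_erase.mpr
          ⟨hm0notim j ((hmPy j).mp hj), (hmPx _).mpr (hGocc j ((hmPy j).mp hj)).1⟩)
        (fun a _ b _ h => hGinj a b h)
    have hcarde := Finset.card_erase_of_mem hm0Px
    have hpos : 1 ≤ Px.card := Finset.card_pos.mpr ⟨m0, hm0Px⟩
    omega
  -- L1 : Px.card ≤ Py.card + 2
  obtain ⟨Φ, hΦdef⟩ : ∃ f : ℕ → ℕ, ∀ i, f i = junction {k₁, k₂} (E i + 1) + i - (E i + 1) :=
    ⟨_, fun _ => rfl⟩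
  have hgoodmem : ∀ i, occursAt w1111 x i →
      junction {k₁, k₂} (s i) + (E i - i) + 1 ≤ junction {k₁, k₂} (E i + 1) →
      occursAt w1111 y (Φ i) ∧ junction {k₁, k₂} (s i) ≤ Φ i ∧
        Φ i + 4 ≤ junction {k₁, k₂} (E i + 1) := by
    intro i hi hgood
    have hiE := hE1 i hi
    have hi3 := hE2 i hi
    have hiE3 := hE3 i hi
    have hsi1 := hs1 i hi
    have hsi2 := hs2 i hi
    have hcEb : junction {k₁, k₂} (E i + 1) ≤ n - 2 := by
      rw [hc]; split_ifs <;> omega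
    have hyrun : ∀ q, junction {k₁, k₂} (s i) ≤ q → q + 1 ≤ junction {k₁, k₂} (E i + 1) →
        y.getD q false = true := by
      intro q hq1 hq2
      have hq2' : q + 2 < n := by omega
      have hGq : s i ≤ G q ∧ G q ≤ E i := by
        rw [hc] at hq1 hq2
        simp only [hG, TwoOnes.Gf]
        split_ifs at hq1 hq2 ⊢ <;> omega
      rw [hyget q hq2']
      rcases le_or_gt (G q) i with h | h
      · exact hsi1 (G q) hGq.1 h
      · exact hiE (G q) (by omega) hGq.2
    have hphi1 : junction {k₁, k₂} (s i) ≤ Φ i := by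
      rw [hΦdef i]; omega
    have hphi2 : Φ i + 4 ≤ junction {k₁, k₂} (E i + 1) := by
      rw [hΦdef i]; omega
    refine ⟨?_, hphi1, hphi2⟩
    rw [TwoOnes.occursAt_iff]
    refine ⟨by omega, ?_, ?_, ?_, ?_⟩ <;> exact hyrun _ (by omega) (by omega)
  set Good := Px.filter (fun i =>
    junction {k₁, k₂} (s i) + (E i - i) + 1 ≤ junction {k₁, k₂} (E i + 1)) with hGoodd
  set Bad := Px.filter (fun i =>
    ¬ (junction {k₁, k₂} (s i) + (E i - i) + 1 ≤ junction {k₁, k₂} (E i + 1))) with hBadd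
  have hsplit : Good.card + Bad.card = Px.card := by
    rw [hGoodd, hBadd]
    exact Finset.card_filter_add_card_filter_not _
  -- Bad has at most 2 elements
  have hBad2 : Bad.card ≤ 2 := by
    have hbadfacts : ∀ i ∈ Bad, occursAt w1111 x i ∧ (i = s i ∨ i = s i + 1) ∧
        ((s i ≤ k₁ ∧ k₁ ≤ E i) ∨ (s i ≤ k₂ ∧ k₂ ≤ E i)) ∧
        (i = s i + 1 → (s i ≤ k₁ ∧ k₁ ≤ E i) ∧ (s i ≤ k₂ ∧ k₂ ≤ E i)) := by
      intro i hi
      rw [hBadd, Finset.mem_filter] at hi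
      obtain ⟨hiPx, hbad⟩ := hi
      have hocc := (hmPx i).mp hiPx
      have hsi2 := hs2 i hocc
      have hi3 := hE2 i hocc
      refine ⟨hocc, ?_⟩
      rw [hc, hc] at hbad
      split_ifs at hbad <;> omega
    obtain ⟨ψ, hψdef⟩ : ∃ f : ℕ → ℕ, ∀ i, f i = if i = s i ∧ s i ≤ k₁ ∧ k₁ ≤ E i then k₁ else k₂ :=
      ⟨_, fun _ => rfl⟩
    have hψrun : ∀ i ∈ Bad, s i ≤ ψ i ∧ ψ i ≤ E i := by
      intro i hi
      obtain ⟨hocc, hd1, hd2, hd3⟩ := hbadfacts i hi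
      rw [hψdef i]
      split_ifs with hcond
      · exact hcond.2
      · rcases hd1 with h | h
        · rcases hd2 with h' | h'
          · exact absurd ⟨h, h'⟩ hcond
          · exact h'
        · exact (hd3 h).2
    have hψinj : Set.InjOn ψ ↑Bad := by
      intro a ha' b hb' hab
      have ha := Finset.mem_coe.mp ha'
      have hb := Finset.mem_coe.mp hb'
      by_contra hne
      obtain ⟨hocca, hda1, hda2, hda3⟩ := hbadfacts a ha
      obtain ⟨hoccb, hdb1, hdb2, hdb3⟩ := hbadfacts b hb
      have hra := hψrun a ha
      have hrb := hψrun b hb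
      have hrun := hrun_eq a b (ψ a) hocca hoccb hra.1 hra.2 (hab ▸ hrb.1) (hab ▸ hrb.2)
      -- same run, a b ∈ {s, s+1}, a ≠ b
      have hcases : (a = s a ∧ b = s a + 1) ∨ (b = s a ∧ a = s a + 1) := by
        rcases hda1 with h | h <;> rcases hdb1 with h' | h' <;> omega
      rcases hcases with ⟨hA, hB⟩ | ⟨hA, hB⟩
      · have hk1in : s b ≤ k₁ ∧ k₁ ≤ E b := (hdb3 (by omega)).1
        have hψa : ψ a = k₁ := by
          rw [hψdef a]
          have hcnd : a = s a ∧ s a ≤ k₁ ∧ k₁ ≤ E a := ⟨hA, by omega, by omega⟩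
          simp only [if_pos hcnd]
        have hψb : ψ b = k₂ := by
          rw [hψdef b]
          have hcnd : ¬ (b = s b ∧ s b ≤ k₁ ∧ k₁ ≤ E b) := by omega
          simp only [if_neg hcnd]
        omega
      · have hk1in : s a ≤ k₁ ∧ k₁ ≤ E a := (hda3 (by omega)).1
        have hψb : ψ b = k₁ := by
          rw [hψdef b]
          have hcnd : b = s b ∧ s b ≤ k₁ ∧ k₁ ≤ E b := ⟨by omega, by omega, by omega⟩
          simp only [if_pos hcnd]
        have hψa : ψ a = k₂ := by
          rw [hψdef a]
          have hcnd : ¬ (a = s a ∧ s a ≤ k₁ ∧ k₁ ≤ E a) := by omega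
          simp only [if_neg hcnd]
        omega
    have := Finset.card_le_card_of_injOn (t := ({k₁, k₂} : Finset ℕ)) ψ (fun i hi => by
      obtain ⟨hocc, hd1, hd2, hd3⟩ := hbadfacts i hi
      have hr := hψrun i hi
      have : ψ i = k₁ ∨ ψ i = k₂ := by
        rw [hψdef i]; split_ifs <;> [exact Or.inl rfl; exact Or.inr rfl]
      simp only [Finset.coe_insert, Finset.coe_singleton, Set.mem_insert_iff, Set.mem_singleton_iff, Finset.mem_coe, Finset.mem_insert, Finset.mem_singleton]
      exact this) hψinj
    omega
  -- Good injects into Py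
  have hGoodPy : Good.card ≤ Py.card := by
    have hmem : ∀ i ∈ Good, Φ i ∈ Py := by
      intro i hi
      rw [hGoodd, Finset.mem_filter] at hi
      exact (hmPy _).mpr (hgoodmem i ((hmPx i).mp hi.1) hi.2).1
    have hkey : ∀ a ∈ Good, ∀ b ∈ Good, a < b → Φ a < Φ b := by
      intro a ha b hb hab
      rw [hGoodd, Finset.mem_filter] at ha hb
      have hocca := (hmPx a).mp ha.1
      have hoccb := (hmPx b).mp hb.1
      have hga := hgoodmem a hocca ha.2
      have hgb := hgoodmem b hoccb hb.2
      rcases eq_or_ne (E a) (E b) with hEE | hEE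
      · have h1 := hΦdef a
        have h2 := hΦdef b
        have hjeq : junction {k₁, k₂} (E a + 1) = junction {k₁, k₂} (E b + 1) := by rw [hEE]
        have hga2 := ha.2
        have hia3 := hE2 a hocca
        omega
      -- different runs : b is beyond E a + 1
      · have hb4 : b + 4 ≤ n := ((TwoOnes.occursAt_iff x b).mp hoccb).1
        have hbe : E a + 2 ≤ b := by
          rcases le_or_gt b (E a) with h | h
          · exfalso
            have h1 : E a ≤ E b := hE5 b hoccb (E a) (hE3 a hocca) (fun m hm1 hm2 => hE1 a hocca m (by omega) hm2)
            have h2 : E b ≤ E a := hE5 a hocca (E b) (hE3 b hoccb) (by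
              intro m hm1 hm2
              rcases le_or_gt m (E a) with h' | h'
              · exact hE1 a hocca m hm1 h'
              · exact hE1 b hoccb m (by omega) hm2)
            omega
          · rcases eq_or_ne b (E a + 1) with h' | h'
            · exfalso
              have hbone : x.getD b false = true := ((TwoOnes.occursAt_iff x b).mp hoccb).2.1
              rcases hE4 a hocca with h'' | h''
              · omega
              · rw [h'] at hbone; rw [h''] at hbone; exact absurd hbone (by simp)
            · omega
        have hsb : E a + 2 ≤ s b := by
          rcases le_or_gt (s b) (E a + 1) with h | h
          · exfalso
            have hone : x.getD (E a + 1) false = true := hs1 b hoccb (E a + 1) h (by omega)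
            rcases hE4 a hocca with h'' | h''
            · omega
            · rw [h''] at hone; exact absurd hone (by simp)
          · omega
        have hmono2 : junction {k₁, k₂} (E a + 1) ≤ junction {k₁, k₂} (s b) := hcmono _ _ (by omega)
        have := hga.2.2
        have := hgb.2.1
        omega
    have hinj : Set.InjOn Φ ↑Good := by
      intro a ha b hb hab
      by_contra hne
      rcases lt_trichotomy a b with h | h | h
      · have := hkey a (Finset.mem_coe.mp ha) b (Finset.mem_coe.mp hb) h; omega
      · exact hne h
      · have := hkey b (Finset.mem_coe.mp hb) a (Finset.mem_coe.mp ha) h; omega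
    exact Finset.card_le_card_of_injOn Φ hmem hinj
  have hL1 : Px.card ≤ Py.card + 2 := by omega
  -- conclude N x = N y
  have heq : Px.card = Py.card := by
    have hm := hmod
    rw [Nat.ModEq, hNwx, hNwy] at hm
    omega
  -- no occurrence of x contains a deleted position
  have hA0 : ∀ i, occursAt w1111 x i → ∀ k ∈ ({k₁, k₂} : Finset ℕ), ¬ (i ≤ k ∧ k < i + w1111.length) := by
    intro i hi k hk hik
    have hk' : k = k₁ ∨ k = k₂ := by simpa using hk
    have := hmiss i k hi hk' hik.1 (by omega)
    omega
  -- no occurrence of y spans a junction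
  have hB0 : ∀ j, occursAt w1111 y j → ∀ k ∈ ({k₁, k₂} : Finset ℕ),
      ¬ (j < junction {k₁, k₂} k ∧ junction {k₁, k₂} k < j + w1111.length) := by
    intro j hj k hk hspan
    obtain ⟨hocc, h3, hlt⟩ := hGocc j hj
    have hkS : k = k₁ ∨ k = k₂ := by simpa using hk
    have hk1 : G j < k := by
      by_contra h
      push_neg at h
      have := hcmono k (G j) h
      rw [hcG j] at this
      omega
    have hk2 : k ≤ G (j+3) := by
      by_contra h
      push_neg at h
      have h5 := hcmono (G (j+3) + 1) k (by omega)
      have h6 : junction {k₁, k₂} (G (j+3) + 1) = j + 4 := by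
        rw [hc]
        have := hGnotS (j+3)
        have := hcG (j+3)
        rw [hc] at this
        split_ifs at this ⊢ <;> omega
      omega
    set i0 := max (G j) (min k (G (j+3) - 3)) with hi0
    have hi0occ : occursAt w1111 x i0 := by
      rw [TwoOnes.occursAt_iff]
      refine ⟨by omega, ?_, ?_, ?_, ?_⟩ <;> exact hF1 j hj _ (by omega) (by omega)
    exact hA0 i0 hi0occ k hk ⟨by omega, by omega⟩
  refine ⟨{k₁, k₂}, ?_, ?_, hy.symm, hA0, hB0⟩
  · intro k hk
    have hk' : k = k₁ ∨ k = k₂ := by simpa using hk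
    omega
  · rw [hS2, hylen]
    omega
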